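/- Under the weighted h-categoriser semantics, solutions are closed under attacker substitution: if D realizes S, x ∈ A, Z ⊆ A × {x} with Σ_{(z,x) ∈ Z} S(z) = (w(x) − S(x))/S(x) (when w(x) ≠ 0), and D' = (D ∩ (A × (A \ {x}))) ∪ Z, then D' also realizes S. -/

import Mathlib

def att {A : Type*} [Fintype A] [DecidableEq A] (D : Finset (A × A)) (a : A) : Finset A :=
  Finset.univ.filter (fun b => (b, a) ∈ D)

/-- Attacker substitution for the weighted h-categoriser semantics: if `D`
realizes `S`, and the attacks into `x` are replaced by a set `Z ⊆ A × {x}`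
whose sources' degrees sum to `(w x − S x)/S x` (when `w x ≠ 0`), then the
resulting attack set also realizes `S`. -/
theorem hc_attacker_substitution {A : Type*} [Fintype A] [DecidableEq A]
    (D Z : Finset (A × A)) (w S : A → ℝ) (x : A)
    (hw : ∀ a, 0 ≤ w a ∧ w a ≤ 1) (hSrange : ∀ a, 0 ≤ S a ∧ S a ≤ 1)
    (hpos : ∀ a, 0 < w a → 0 < S a) (hzero : ∀ a, w a = 0 → S a = 0)
    (hD : ∀ a, S a = w a / (1 + ∑ b ∈ att D a, S b))
    (hZ : ∀ p ∈ Z, p.2 = x)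
    (hsum : w x ≠ 0 → ∑ p ∈ Z, S p.1 = (w x - S x) / S x) :
    ∀ a, S a = w a / (1 + ∑ b ∈ att (D.filter (fun p => p.2 ≠ x) ∪ Z) a, S b) := by
  intro a
  by_cases hax : a = x
  · subst hax
    by_cases hwa : w a = 0
    · simp [hwa, hzero a hwa]
    · have hSa : 0 < S a := hpos a (lt_of_le_of_ne (hw a).1 (Ne.symm hwa))
      have hs : ∑ b ∈ att (D.filter (fun p => p.2 ≠ a) ∪ Z) a, S b = ∑ p ∈ Z, S p.1 := by
        apply Finset.sum_bij (fun b _ => (b, a))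
        · intro b hb
          simp only [att, Finset.mem_filter, Finset.mem_univ, Finset.mem_union, true_and] at hb
          rcases hb with h | h
          · exact absurd rfl h.2
          · exact h
        · intro b1 h1 b2 h2 h; exact (Prod.mk.injEq ..).mp h |>.1
        · intro p hp
          refine ⟨p.1, ?_, ?_⟩
          · simp only [att, Finset.mem_filter, Finset.mem_univ, Finset.mem_union, true_and]
            right; rw [← hZ p hp]; simpa using hp
          · exact Prod.ext rfl (hZ p hp).symm
        · intro b hb; rfl
      rw [hs, hsum hwa]
      field_simp
      rw [show S a + (w a - S a) = w a by ring, div_self hwa]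
  · have hs : att (D.filter (fun p => p.2 ≠ x) ∪ Z) a = att D a := by
      ext b
      simp only [att, Finset.mem_filter, Finset.mem_univ, Finset.mem_union, true_and]
      constructor
      · rintro (h | h)
        · exact h.1
        · exact absurd (hZ _ h) hax
      · intro h; exact Or.inl ⟨h, hax⟩
    rw [hs]; exact hD a
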